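/- arXiv:2602.17695 — 3 statements merged into one kernel-verified Lean document; each statement's English description precedes it below -/
import Mathlib

section
/- Let r : Y → ℝ be a reward, β > 0, π_base and π* strictly positive distributions with r(y) = β log(π*(y)/π_base(y)) + β log Z for a constant Z > 0. Define the Bradley–Terry probability p(y₁ ≻ y₂) = exp(r(y₁)) / (exp(r(y₁)) + exp(r(y₂))). Then p(y₁ ≻ y₂) = 1 / (1 + exp(β log(π*(y₂)/π_base(y₂)) − β log(π*(y₁)/π_base(y₁)))). -/
open Real

theorem dpo_bradley_terry_identity
    {Y : Type*}
    (π_base π_star : Y → ℝ)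
    (hbpos : ∀ y, 0 < π_base y) (hspos : ∀ y, 0 < π_star y)
    (r : Y → ℝ) (β : ℝ) (hβ : 0 < β)
    (Z : ℝ) (hZ : 0 < Z)
    (hr : ∀ y, r y = β * Real.log (π_star y / π_base y) + β * Real.log Z)
    (y₁ y₂ : Y) :
    Real.exp (r y₁) / (Real.exp (r y₁) + Real.exp (r y₂))
      = 1 / (1 + Real.exp (β * Real.log (π_star y₂ / π_base y₂)
            - β * Real.log (π_star y₁ / π_base y₁))) := by
  have hdiff : β * Real.log (π_star y₂ / π_base y₂)
      - β * Real.log (π_star y₁ / π_base y₁) = r y₂ - r y₁ := by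
    rw [hr, hr]; ring
  rw [hdiff, Real.exp_sub]
  have h1 : Real.exp (r y₁) > 0 := Real.exp_pos _
  have h2 : Real.exp (r y₂) > 0 := Real.exp_pos _
  field_simp
end

section
/- Let F : Set(A) → ℝ be a set function on subsets of a finite ground set A, with F(∅) = 0, F monotone (S ⊆ T implies F(S) ≤ F(T)), and submodularity ratio γ ∈ (0,1], meaning for all S ⊆ A and L ⊆ A∖S: Σ_{a∈L} (F(S∪{a}) − F(S)) ≥ γ·(F(S∪L) − F(S)). Let S* be an optimal solution of max_{|A'| ≤ k} F(A'), and let S₀ = ∅, S_{t+1} = S_t ∪ {a_{t+1}} where a_{t+1} maximizes the marginal gain F(S_t∪{a}) − F(S_t) over a ∈ A∖S_t. Then for each t, F(S_{t+1}) − F(S_t) ≥ (γ/k)·(F(S*) − F(S_t)). -/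
open Finset

theorem greedy_one_step_progress
    {α : Type*} [Fintype α] [DecidableEq α]
    (F : Finset α → ℝ) (hnorm : F ∅ = 0)
    (hmono : ∀ S T : Finset α, S ⊆ T → F S ≤ F T)
    (γ : ℝ) (hγ0 : 0 < γ) (hγ1 : γ ≤ 1)
    (hsub : ∀ S L : Finset α, Disjoint L S →
      ∑ a ∈ L, (F (insert a S) - F S) ≥ γ * (F (S ∪ L) - F S))
    (k : ℕ) (hk : 1 ≤ k)
    (Sstar : Finset α) (hScard : Sstar.card ≤ k)
    (hSopt : ∀ T : Finset α, T.card ≤ k → F T ≤ F Sstar)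
    (S : Finset α) (astar : α) (hastar : astar ∉ S)
    (hgreedy : ∀ a : α, a ∉ S →
      F (insert a S) - F S ≤ F (insert astar S) - F S) :
    F (insert astar S) - F S ≥ (γ / k) * (F Sstar - F S) := by
  set g := F (insert astar S) - F S with hg
  have hg0 : 0 ≤ g := by
    have := hmono S (insert astar S) (subset_insert _ _)
    linarith
  set L := Sstar \ S with hL
  have hdisj : Disjoint L S := sdiff_disjoint
  have hsum := hsub S L hdisj
  have hsubset : Sstar ⊆ S ∪ L := by
    intro x hx
    by_cases hxS : x ∈ S
    · exact mem_union_left _ hxS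
    · exact mem_union_right _ (mem_sdiff.mpr ⟨hx, hxS⟩)
  have hmono2 : F Sstar ≤ F (S ∪ L) := hmono _ _ hsubset
  have hsum2 : ∑ a ∈ L, (F (insert a S) - F S) ≥ γ * (F Sstar - F S) := by
    have : γ * (F Sstar - F S) ≤ γ * (F (S ∪ L) - F S) := by
      apply mul_le_mul_of_nonneg_left (by linarith) (le_of_lt hγ0)
    linarith [hsum]
  have hbound : ∑ a ∈ L, (F (insert a S) - F S) ≤ (L.card : ℝ) * g := by
    have h1 : ∑ a ∈ L, (F (insert a S) - F S) ≤ ∑ _a ∈ L, g :=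
      Finset.sum_le_sum fun a ha => hgreedy a (mem_sdiff.mp ha).2
    have h2 : ∑ _a ∈ L, g = (L.card : ℝ) * g := by
      rw [Finset.sum_const, nsmul_eq_mul]
    linarith
  have hLk : (L.card : ℝ) ≤ k := by
    exact_mod_cast le_trans (card_le_card (sdiff_subset)) hScard
  have hk0 : (0:ℝ) < k := by exact_mod_cast hk
  by_cases hpos : F Sstar - F S ≤ 0
  · have : (γ / k) * (F Sstar - F S) ≤ 0 :=
      mul_nonpos_of_nonneg_of_nonpos (le_of_lt (div_pos hγ0 hk0)) hpos
    linarith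
  · push_neg at hpos
    have hkg : (k : ℝ) * g ≥ γ * (F Sstar - F S) := by
      have hLg : (L.card : ℝ) * g ≥ γ * (F Sstar - F S) := le_trans hsum2 hbound
      nlinarith
    rw [ge_iff_le, div_mul_eq_mul_div, div_le_iff₀ hk0]
    linarith [hkg]
end

section
/- Let F : Set(A) → ℝ be normalized (F(∅)=0), monotone, with submodularity ratio γ ∈ (0,1]. Let S_k be the output of k steps of greedy marginal-gain maximization starting from ∅, and S* an optimizer of F over subsets of size at most k. Then F(S_k) ≥ (1 − e^{−γ})·F(S*). -/
open Finset

theorem greedy_guarantee_weak_submodularity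
    {α : Type*} [Fintype α] [DecidableEq α]
    (F : Finset α → ℝ) (hnorm : F ∅ = 0)
    (hmono : ∀ S T : Finset α, S ⊆ T → F S ≤ F T)
    (γ : ℝ) (hγ0 : 0 < γ) (hγ1 : γ ≤ 1)
    (hsub : ∀ S L : Finset α, Disjoint L S →
      ∑ a ∈ L, (F (insert a S) - F S) ≥ γ * (F (S ∪ L) - F S))
    (k : ℕ) (hk : 1 ≤ k)
    (Sstar : Finset α) (hScard : Sstar.card ≤ k)
    (hSopt : ∀ T : Finset α, T.card ≤ k → F T ≤ F Sstar)
    (S : ℕ → Finset α) (a : ℕ → α)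
    (hS0 : S 0 = ∅)
    (hstep : ∀ t, t < k → S (t + 1) = insert (a t) (S t))
    (hnotmem : ∀ t, t < k → a t ∉ S t)
    (hgreedy : ∀ t, t < k → ∀ b : α, b ∉ S t →
      F (insert b (S t)) - F (S t) ≤ F (insert (a t) (S t)) - F (S t)) :
    F (S k) ≥ (1 - Real.exp (-γ)) * F Sstar := by
  have hkR : (0:ℝ) < (k:ℝ) := by exact_mod_cast hk
  have hbase : (0:ℝ) ≤ 1 - γ / k := by
    have : γ / k ≤ 1 := by
      rw [div_le_one hkR]
      calc γ ≤ 1 := hγ1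
        _ ≤ (k:ℝ) := by exact_mod_cast hk
    linarith
  have hFstar : 0 ≤ F Sstar := by
    have := hmono ∅ Sstar (empty_subset _)
    linarith [this, hnorm]
  -- one-step inequality
  have step : ∀ t, t < k →
      F Sstar - F (S (t+1)) ≤ (1 - γ / k) * (F Sstar - F (S t)) := by
    intro t ht
    set L := Sstar \ S t with hL
    have hdisj : Disjoint L (S t) := sdiff_disjoint
    have h1 := hsub (S t) L hdisj
    have hsup : Sstar ⊆ S t ∪ L := by
      intro x hx
      by_cases hxs : x ∈ S t
      · exact mem_union_left _ hxs
      · exact mem_union_right _ (mem_sdiff.mpr ⟨hx, hxs⟩)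
    have h2 : γ * (F Sstar - F (S t)) ≤ γ * (F (S t ∪ L) - F (S t)) := by
      have := hmono Sstar (S t ∪ L) hsup
      nlinarith
    set g := F (insert (a t) (S t)) - F (S t) with hg
    have hg0 : 0 ≤ g := by
      have := hmono (S t) (insert (a t) (S t)) (subset_insert _ _)
      linarith
    have h3 : ∑ x ∈ L, (F (insert x (S t)) - F (S t)) ≤ L.card * g := by
      calc ∑ x ∈ L, (F (insert x (S t)) - F (S t)) ≤ ∑ x ∈ L, g := by
            apply Finset.sum_le_sum
            intro x hx
            exact hgreedy t ht x (mem_sdiff.mp hx).2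
        _ = L.card * g := by rw [Finset.sum_const, nsmul_eq_mul]
    have hcard : (L.card : ℝ) ≤ k := by
      have : L.card ≤ Sstar.card := card_le_card (sdiff_subset)
      exact_mod_cast this.trans hScard
    have h4 : (L.card : ℝ) * g ≤ (k:ℝ) * g := by
      exact mul_le_mul_of_nonneg_right hcard hg0
    have h5 : γ * (F Sstar - F (S t)) ≤ (k:ℝ) * g := by linarith
    have h6 : γ / k * (F Sstar - F (S t)) ≤ g := by
      rw [div_mul_eq_mul_div, div_le_iff₀ hkR]
      linarith [h5]
    have hSt1 : F (S (t+1)) = F (insert (a t) (S t)) := by rw [hstep t ht]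
    rw [hSt1]
    have : F (insert (a t) (S t)) = F (S t) + g := by rw [hg]; ring
    rw [this]; nlinarith [h6]
  -- induction
  have main : ∀ t, t ≤ k → F Sstar - F (S t) ≤ (1 - γ / k)^t * F Sstar := by
    intro t
    induction t with
    | zero => intro _; simp [hS0, hnorm]
    | succ n ih =>
      intro hn
      have hnk : n < k := hn
      have h1 := step n hnk
      have h2 := ih (le_of_lt hnk)
      calc F Sstar - F (S (n+1)) ≤ (1 - γ / k) * (F Sstar - F (S n)) := h1
        _ ≤ (1 - γ / k) * ((1 - γ / k)^n * F Sstar) :=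
            mul_le_mul_of_nonneg_left h2 hbase
        _ = (1 - γ / k)^(n+1) * F Sstar := by ring
  have hmain := main k le_rfl
  have hexp : (1 - γ / k)^k ≤ Real.exp (-γ) := by
    have h1 : 1 - γ / k ≤ Real.exp (-(γ / k)) := by
      have := Real.add_one_le_exp (-(γ / k))
      linarith
    calc (1 - γ / k)^k ≤ (Real.exp (-(γ / k)))^k := by
          exact pow_le_pow_left₀ hbase h1 k
      _ = Real.exp ((k:ℝ) * (-(γ / k))) := by rw [← Real.exp_nat_mul]
      _ = Real.exp (-γ) := by
          congr 1
          field_simp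
  have : (1 - γ / k)^k * F Sstar ≤ Real.exp (-γ) * F Sstar :=
    mul_le_mul_of_nonneg_right hexp hFstar
  nlinarith [hmain]
end
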